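/- Let a, r be real numbers with 0 < r < a < 1, define G(x) = x + √((4 − a² + 2arx − r²)/(a² − 2arx + r²))·√(1 − x²), and set x₀ = (2r + a² + r²)/(2a(1 + r)). Then G is differentiable at x₀ with G′(x₀) = 0, and G attains its maximum over the interval [r/a, 1] at x₀, i.e. G(x) ≤ G(x₀) for all x ∈ [r/a, 1]. -/

import Mathlib

theorem stmt_14 (a r : ℝ) (hr : 0 < r) (hra : r < a) (ha : a < 1)
    (G : ℝ → ℝ)
    (hG : ∀ x, G x = x + Real.sqrt ((4 - a ^ 2 + 2 * a * r * x - r ^ 2) /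
        (a ^ 2 - 2 * a * r * x + r ^ 2)) * Real.sqrt (1 - x ^ 2))
    (x₀ : ℝ) (hx₀ : x₀ = (2 * r + a ^ 2 + r ^ 2) / (2 * a * (1 + r))) :
    HasDerivAt G 0 x₀ ∧ ∀ x ∈ Set.Icc (r / a) 1, G x ≤ G x₀ := by
  have ha0 : 0 < a := hr.trans hra
  have h1r : 0 < 1 + r := by linarith
  have hden : (2 * a * (1 + r)) ≠ 0 := by positivity
  have hA : 0 < (2 + r) ^ 2 - a ^ 2 := by nlinarith [sq_nonneg (2 + r - a), sq_nonneg (2 + r + a)]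
  have hB : 0 < a ^ 2 - r ^ 2 := by nlinarith [sq_nonneg (a - r), sq_nonneg (a + r)]
  set β := Real.sqrt ((2 + r) ^ 2 - a ^ 2) with hβ
  set γ := Real.sqrt (a ^ 2 - r ^ 2) with hγ
  have hβ2 : β ^ 2 = (2 + r) ^ 2 - a ^ 2 := Real.sq_sqrt hA.le
  have hγ2 : γ ^ 2 = a ^ 2 - r ^ 2 := Real.sq_sqrt hB.le
  have hβpos : 0 < β := Real.sqrt_pos.mpr hA
  have hγpos : 0 < γ := Real.sqrt_pos.mpr hB
  have hD0 : a ^ 2 - 2 * a * r * x₀ + r ^ 2 = (a ^ 2 - r ^ 2) / (1 + r) := by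
    rw [hx₀]; field_simp; ring
  have hN0 : 4 - a ^ 2 + 2 * a * r * x₀ - r ^ 2 = ((2 + r) ^ 2 - a ^ 2) / (1 + r) := by
    rw [hx₀]; field_simp; ring
  have hD0pos : 0 < a ^ 2 - 2 * a * r * x₀ + r ^ 2 := by rw [hD0]; positivity
  have hQ0 : (4 - a ^ 2 + 2 * a * r * x₀ - r ^ 2) / (a ^ 2 - 2 * a * r * x₀ + r ^ 2)
      = ((2 + r) ^ 2 - a ^ 2) / (a ^ 2 - r ^ 2) := by
    rw [hD0, hN0]; field_simp
  have h1x0 : 1 - x₀ ^ 2 = ((a ^ 2 - r ^ 2) * ((2 + r) ^ 2 - a ^ 2)) / (2 * a * (1 + r)) ^ 2 := by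
    rw [hx₀]; field_simp; ring
  have h1x0pos : 0 < 1 - x₀ ^ 2 := by rw [h1x0]; positivity
  have hu : Real.sqrt ((4 - a ^ 2 + 2 * a * r * x₀ - r ^ 2) / (a ^ 2 - 2 * a * r * x₀ + r ^ 2))
      = β / γ := by rw [hQ0, Real.sqrt_div hA.le]
  have hv : Real.sqrt (1 - x₀ ^ 2) = γ * β / (2 * a * (1 + r)) := by
    rw [h1x0, Real.sqrt_div (by positivity), Real.sqrt_mul hB.le,
      Real.sqrt_sq (by positivity)]
  have hGx₀ : G x₀ = (2 + r) / a := by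
    rw [hG x₀, hu, hv]
    have h : β / γ * (γ * β / (2 * a * (1 + r))) = β ^ 2 / (2 * a * (1 + r)) := by
      field_simp
    rw [h, hβ2, hx₀]
    field_simp; ring
  constructor
  · -- derivative
    have hQ0pos : 0 < (4 - a ^ 2 + 2 * a * r * x₀ - r ^ 2) / (a ^ 2 - 2 * a * r * x₀ + r ^ 2) := by
      rw [hQ0]; positivity
    have hNd : HasDerivAt (fun x : ℝ => 4 - a ^ 2 + 2 * a * r * x - r ^ 2) (2 * a * r) x₀ := by
      simpa using (((hasDerivAt_id x₀).const_mul (2 * a * r)).const_add (4 - a ^ 2)).sub_const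
        (r ^ 2)
    have hDd : HasDerivAt (fun x : ℝ => a ^ 2 - 2 * a * r * x + r ^ 2) (-(2 * a * r)) x₀ := by
      simpa using (((hasDerivAt_id x₀).const_mul (2 * a * r)).const_sub (a ^ 2)).add_const
        (r ^ 2)
    have hQd := hNd.div hDd hD0pos.ne'
    have hsQ := (Real.hasDerivAt_sqrt hQ0pos.ne').comp x₀ hQd
    have h1d : HasDerivAt (fun x : ℝ => 1 - x ^ 2) (-(2 * x₀)) x₀ := by
      simpa using ((hasDerivAt_pow 2 x₀).const_sub 1)
    have hs1 := (Real.hasDerivAt_sqrt h1x0pos.ne').comp x₀ h1d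
    have hsum := (hasDerivAt_id x₀).add (hsQ.mul hs1)
    have hGfun : G = fun x => x + Real.sqrt ((4 - a ^ 2 + 2 * a * r * x - r ^ 2) /
        (a ^ 2 - 2 * a * r * x + r ^ 2)) * Real.sqrt (1 - x ^ 2) := funext hG
    have e1 : (2 * a * r * (a ^ 2 - 2 * a * r * x₀ + r ^ 2) -
        (4 - a ^ 2 + 2 * a * r * x₀ - r ^ 2) * -(2 * a * r)) /
        (a ^ 2 - 2 * a * r * x₀ + r ^ 2) ^ 2
        = 8 * a * r * (1 + r) ^ 2 / (a ^ 2 - r ^ 2) ^ 2 := by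
      rw [hD0, hN0]
      field_simp
      ring
    rw [hGfun]
    convert hsum using 1
    case e'_4 => rfl
    case e'_5 => rfl
    case e'_8 => rfl
    simp only [Function.comp_apply, id_eq, Pi.div_apply]
    rw [hu, hv, e1, hx₀]
    have t1 : 1 / (2 * (β / γ)) * (8 * a * r * (1 + r) ^ 2 / (a ^ 2 - r ^ 2) ^ 2) *
        (γ * β / (2 * a * (1 + r))) = 2 * r * (1 + r) * γ ^ 2 / (a ^ 2 - r ^ 2) ^ 2 := by
      field_simp
      ring
    have t2 : β / γ * (1 / (2 * (γ * β / (2 * a * (1 + r)))) *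
        -(2 * ((2 * r + a ^ 2 + r ^ 2) / (2 * a * (1 + r)))))
        = -((2 * r + a ^ 2 + r ^ 2) / γ ^ 2) := by
      field_simp
    rw [t1, t2, hγ2]
    field_simp
    ring
  · -- maximum
    intro x hx
    obtain ⟨hxl, hxr⟩ := hx
    have hax : r ≤ a * x := by
      have := (div_le_iff₀ ha0).mp hxl; linarith [this]
    have hD : 0 < a ^ 2 - 2 * a * r * x + r ^ 2 := by
      have h1 : 0 ≤ 2 * a * r * (1 - x) := by
        apply mul_nonneg (by positivity); linarith
      have h2 : 0 < (a - r) ^ 2 := pow_pos (by linarith) 2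
      have h4 : a ^ 2 - 2 * a * r * x + r ^ 2 = (a - r) ^ 2 + 2 * a * r * (1 - x) := by ring
      linarith [h1, h2, h4]
    have hN : 0 ≤ 4 - a ^ 2 + 2 * a * r * x - r ^ 2 := by
      have h3 : 2 * r * r ≤ 2 * r * (a * x) :=
        mul_le_mul_of_nonneg_left hax (by linarith)
      have h5 : a * a ≤ 1 * 1 :=
        mul_le_mul ha.le ha.le ha0.le zero_le_one
      have h6 : 2 * a * r * x = 2 * r * (a * x) := by ring
      have h8 : a ^ 2 = a * a := sq a
      have h9 : r ^ 2 = r * r := sq r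
      linarith [h3, h5, h6, h8, h9, sq_nonneg r]
    have hx0 : (0:ℝ) ≤ x := le_trans (by positivity) hxl
    have h1x : 0 ≤ 1 - x ^ 2 := by
      have h7 : x ^ 2 ≤ 1 ^ 2 := pow_le_pow_left₀ hx0 hxr 2
      linarith [h7]
    have hcx : 0 ≤ (2 + r) / a - x := by
      have : (1:ℝ) ≤ (2 + r) / a := by
        rw [le_div_iff₀ ha0]; linarith
      linarith
    rw [hG x, hGx₀]
    have key : (4 - a ^ 2 + 2 * a * r * x - r ^ 2) / (a ^ 2 - 2 * a * r * x + r ^ 2) * (1 - x ^ 2)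
        ≤ ((2 + r) / a - x) ^ 2 := by
      rw [div_mul_eq_mul_div, div_le_iff₀ hD]
      have hc : ((2 + r) / a - x) ^ 2 = (2 + r - a * x) ^ 2 / a ^ 2 := by
        field_simp
        try ring
      rw [hc, div_mul_eq_mul_div, le_div_iff₀ (by positivity : (0:ℝ) < a ^ 2)]
      have hid : (2 + r - a * x) ^ 2 * (a ^ 2 - 2 * a * r * x + r ^ 2) -
          (4 - a ^ 2 + 2 * a * r * x - r ^ 2) * (1 - x ^ 2) * a ^ 2
          = (2 * a * (1 + r) * x - (2 * r + a ^ 2 + r ^ 2)) ^ 2 := by ring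
      linarith [sq_nonneg (2 * a * (1 + r) * x - (2 * r + a ^ 2 + r ^ 2)), hid]
    have hs : Real.sqrt ((4 - a ^ 2 + 2 * a * r * x - r ^ 2) /
        (a ^ 2 - 2 * a * r * x + r ^ 2)) * Real.sqrt (1 - x ^ 2) ≤ (2 + r) / a - x := by
      rw [← Real.sqrt_mul (by positivity)]
      calc Real.sqrt ((4 - a ^ 2 + 2 * a * r * x - r ^ 2) /
            (a ^ 2 - 2 * a * r * x + r ^ 2) * (1 - x ^ 2))
          ≤ Real.sqrt (((2 + r) / a - x) ^ 2) := Real.sqrt_le_sqrt key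
        _ = (2 + r) / a - x := Real.sqrt_sq hcx
    linarith
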